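/- Let Ω be a Reinhardt domain in ℂⁿ such that the Bergman kernel satisfies K(z,z) ≠ 0 for all z ∈ Ω, let J ∈ ℤⁿ, and let φ ∈ L^∞(Ω). Then the Berezin transform of the J-th quasi-homogeneous component of φ equals the J-th quasi-homogeneous component of the Berezin transform of φ: (φ_J)~ = (φ̃)_J on Ω. -/

import Mathlib

open MeasureTheory Complex Filter Topology Metric

noncomputable section

/-- `ℂⁿ`. -/
abbrev Cn (n : ℕ) := Fin n → ℂ

/-- The coordinatewise (torus/polydisc) action `ξ ⋄ z`. -/
def torusSMul {n : ℕ} (ξ z : Cn n) : Cn n := fun i => ξ i * z i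

/-- The unit torus `𝕋ⁿ`. -/
def unitTorus (n : ℕ) : Set (Cn n) := {ξ | ∀ i, ‖ξ i‖ = 1}

/-- A set `Ω ⊆ ℂⁿ` is Reinhardt if `ξ ⋄ z ∈ Ω` whenever `z ∈ Ω` and `ξ ∈ 𝕋ⁿ`. -/
def IsReinhardt {n : ℕ} (Ω : Set (Cn n)) : Prop :=
  ∀ z ∈ Ω, ∀ ξ ∈ unitTorus n, torusSMul ξ z ∈ Ω

/-- A set `Ω ⊆ ℂⁿ` is complete Reinhardt if `λ ⋄ z ∈ Ω` whenever `z ∈ Ω` and `λ ∈ 𝔻ⁿ`. -/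
def IsCompleteReinhardt {n : ℕ} (Ω : Set (Cn n)) : Prop :=
  ∀ z ∈ Ω, ∀ l : Cn n, (∀ i, ‖l i‖ < 1) → torusSMul l z ∈ Ω

/-- Lebesgue measure restricted to `Ω`. -/
abbrev restVol {n : ℕ} (Ω : Set (Cn n)) : Measure (Cn n) := volume.restrict Ω

/-- The subspace of `L²(Ω)` of functions having a holomorphic representative on `Ω`. -/
def holoSub {n : ℕ} (Ω : Set (Cn n)) : Submodule ℂ (Lp ℂ 2 (restVol Ω)) where
  carrier := {f | ∃ g : Cn n → ℂ, DifferentiableOn ℂ g Ω ∧ ∀ᵐ z ∂(restVol Ω), f z = g z}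
  add_mem' := by
    rintro f g ⟨gf, hgf, hf⟩ ⟨gg, hgg, hg⟩
    refine ⟨gf + gg, hgf.add hgg, ?_⟩
    filter_upwards [hf, hg, Lp.coeFn_add f g] with z h1 h2 h3
    rw [h3, Pi.add_apply, h1, h2]; rfl
  zero_mem' := by
    refine ⟨0, differentiableOn_const 0, ?_⟩
    filter_upwards [Lp.coeFn_zero ℂ 2 (restVol _)] with z hz
    simpa using hz
  smul_mem' := by
    rintro c f ⟨gf, hgf, hf⟩
    refine ⟨c • gf, hgf.const_smul c, ?_⟩
    filter_upwards [hf, Lp.coeFn_smul c f] with z h1 h2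
    rw [h2, Pi.smul_apply, h1]; rfl

/-- The Bergman space `A²(Ω)`, the closed subspace of `L²(Ω)` of (a.e. equivalence
classes of) square-integrable holomorphic functions on `Ω`. -/
def A2 {n : ℕ} (Ω : Set (Cn n)) : Submodule ℂ (Lp ℂ 2 (restVol Ω)) :=
  (holoSub Ω).topologicalClosure

instance A2.instCompleteSpace {n : ℕ} (Ω : Set (Cn n)) : CompleteSpace (A2 Ω) :=
  (Submodule.isClosed_topologicalClosure _).completeSpace_coe

/-- The Bergman projection, i.e. the orthogonal projection of `L²(Ω)` onto `A²(Ω)`. -/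
def bergmanProj {n : ℕ} (Ω : Set (Cn n)) : Lp ℂ 2 (restVol Ω) →L[ℂ] A2 Ω :=
  Submodule.orthogonalProjectionOnto (A2 Ω)

/-- `T` is the Toeplitz operator with symbol `φ` on `A²(Ω)`: `T f = P (φ f)`. -/
def IsToeplitz {n : ℕ} (Ω : Set (Cn n)) (φ : Cn n → ℂ) (T : A2 Ω →L[ℂ] A2 Ω) : Prop :=
  ∀ f : A2 Ω, ∃ hm : MemLp (fun z => φ z * (f : Lp ℂ 2 (restVol Ω)) z) 2 (restVol Ω),
    T f = bergmanProj Ω (hm.toLp _)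

/-- `H` is the Hankel operator with symbol `φ`: `H f = (I - P)(φ f)`. -/
def IsHankel {n : ℕ} (Ω : Set (Cn n)) (φ : Cn n → ℂ)
    (H : A2 Ω →L[ℂ] Lp ℂ 2 (restVol Ω)) : Prop :=
  ∀ f : A2 Ω, ∃ hm : MemLp (fun z => φ z * (f : Lp ℂ 2 (restVol Ω)) z) 2 (restVol Ω),
    H f = hm.toLp _ - (bergmanProj Ω (hm.toLp _) : Lp ℂ 2 (restVol Ω))

/-- `Kf` is the Bergman kernel of `Ω`: for each `z ∈ Ω`, `Kf (·, z)` is a holomorphic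
square-integrable function reproducing at `z` the values of all functions in `A²(Ω)`. -/
def IsBergmanKernel {n : ℕ} (Ω : Set (Cn n)) (Kf : Cn n → Cn n → ℂ) : Prop :=
  ∀ z ∈ Ω, DifferentiableOn ℂ (fun w => Kf w z) Ω ∧
    ∃ hm : MemLp (fun w => Kf w z) 2 (restVol Ω),
      ∀ (g : Cn n → ℂ) (hg : MemLp g 2 (restVol Ω)), DifferentiableOn ℂ g Ω →
        g z = (inner ℂ (hm.toLp _) (hg.toLp g) : ℂ)

/-- The Bergman kernel is positive on the diagonal of `Ω` (automatic for bounded domains). -/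
def KernelDiagPos {n : ℕ} (Ω : Set (Cn n)) (Kf : Cn n → Cn n → ℂ) : Prop :=
  ∀ z ∈ Ω, (Kf z z).im = 0 ∧ 0 < (Kf z z).re

/-- `k` is the family of normalized Bergman kernels `k_z = K(·,z)/√K(z,z)`, as elements
of `A²(Ω)`. -/
def IsNormalizedKernel {n : ℕ} (Ω : Set (Cn n)) (Kf : Cn n → Cn n → ℂ)
    (k : Cn n → A2 Ω) : Prop :=
  ∀ z ∈ Ω, ∀ᵐ w ∂(restVol Ω),
    (k z : Lp ℂ 2 (restVol Ω)) w = Kf w z / (Real.sqrt ((Kf z z).re) : ℂ)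

/-- The Berezin transform of a bounded operator `T` on `A²(Ω)`: `T̃(z) = ⟨T k_z, k_z⟩`
(in the mathematicians' convention; `inner` below is conjugate-linear in the first slot). -/
def berezinOp {n : ℕ} {Ω : Set (Cn n)} (k : Cn n → A2 Ω) (T : A2 Ω →L[ℂ] A2 Ω)
    (z : Cn n) : ℂ :=
  inner ℂ ((k z : Lp ℂ 2 (restVol Ω))) ((T (k z) : Lp ℂ 2 (restVol Ω)))

/-- `F(z) → 0` as `z → bΩ` (`z` ranging over `Ω`). -/
def BoundaryVanish {X E : Type*} [TopologicalSpace X] [TopologicalSpace E] [Zero E]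
    (Ω : Set X) (F : X → E) : Prop :=
  ∀ p ∈ frontier Ω, Tendsto F (nhdsWithin p Ω) (nhds 0)

/-- `ξ^J` for a multi-index `J ∈ ℤⁿ`. -/
def tpow {n : ℕ} (ξ : Cn n) (J : Fin n → ℤ) : ℂ := ∏ i, ξ i ^ J i

/-- The average of `g` over the unit torus `𝕋ⁿ` with respect to the normalized Haar
measure `σ` (`σ(𝕋ⁿ) = 1`). -/
def torusAvg (n : ℕ) (g : Cn n → ℂ) : ℂ :=
  (((2 * Real.pi) ^ n)⁻¹ : ℝ) •
    ∫ θ in (Set.univ.pi fun _ : Fin n => Set.Ioc (0 : ℝ) (2 * Real.pi)),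
      g (fun i => Complex.exp ((θ i : ℂ) * Complex.I))

/-- The `J`-th quasi-homogeneous component `f_J(z) = ∫_{𝕋ⁿ} f(ξ ⋄ z) ξ̄^J dσ(ξ)`. -/
def qhComp {n : ℕ} (J : Fin n → ℤ) (f : Cn n → ℂ) (z : Cn n) : ℂ :=
  torusAvg n (fun ξ => f (torusSMul ξ z) * (starRingEnd ℂ) (tpow ξ J))

/-- `φ` is quasi-homogeneous of multidegree `J`: `φ(ξ ⋄ z) = ξ^J φ(z)` for a.e. `z ∈ Ω`
and every `ξ ∈ 𝕋ⁿ`. -/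
def IsQuasiHomogeneous {n : ℕ} (Ω : Set (Cn n)) (J : Fin n → ℤ) (φ : Cn n → ℂ) : Prop :=
  ∀ ξ ∈ unitTorus n, ∀ᵐ z ∂(restVol Ω), φ (torusSMul ξ z) = tpow ξ J * φ z

/-- The Berezin transform of a symbol `φ`:
`φ̃(z) = ∫_Ω φ(w) |K(w,z)|²/K(z,z) dV(w)`. -/
def berezinFn {n : ℕ} (Ω : Set (Cn n)) (Kf : Cn n → Cn n → ℂ) (φ : Cn n → ℂ)
    (z : Cn n) : ℂ :=
  (∫ w in Ω, φ w * (Complex.ofReal (‖Kf w z‖ ^ 2))) / Kf z z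


namespace BQC
open MeasureTheory Complex
variable {n : ℕ} {Ω : Set (Cn n)} {ξ : Cn n}

def tInv {n : ℕ} (ξ : Cn n) : Cn n := fun i => (ξ i)⁻¹

lemma mem_exp (θ : Fin n → ℝ) : (fun i => Complex.exp ((θ i : ℂ) * Complex.I)) ∈ unitTorus n :=
  fun i => Complex.norm_exp_ofReal_mul_I (θ i)

lemma tInv_mem (hξ : ξ ∈ unitTorus n) : tInv ξ ∈ unitTorus n := by
  intro i; simp [tInv, map_inv₀, hξ i]

lemma ne_zero (hξ : ξ ∈ unitTorus n) (i : Fin n) : ξ i ≠ 0 := by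
  intro h; have := hξ i; rw [h] at this; simp at this

lemma tInv_smul (hξ : ξ ∈ unitTorus n) (z : Cn n) : torusSMul (tInv ξ) (torusSMul ξ z) = z := by
  funext i; simp only [torusSMul, tInv]; field_simp [ne_zero hξ i]

lemma smul_tInv (hξ : ξ ∈ unitTorus n) (z : Cn n) : torusSMul ξ (torusSMul (tInv ξ) z) = z := by
  funext i; simp only [torusSMul, tInv]; field_simp [ne_zero hξ i]

lemma continuous_torusSMul (ξ : Cn n) : Continuous (torusSMul ξ) :=
  continuous_pi fun i => continuous_const.mul (continuous_apply i)

/-- `torusSMul ξ` as a measurable equivalence, for `ξ` in the torus. -/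
def tEquiv (hξ : ξ ∈ unitTorus n) : Cn n ≃ᵐ Cn n where
  toFun := torusSMul ξ
  invFun := torusSMul (tInv ξ)
  left_inv := tInv_smul hξ
  right_inv := smul_tInv hξ
  measurable_toFun := (continuous_torusSMul ξ).measurable
  measurable_invFun := (continuous_torusSMul (tInv ξ)).measurable

lemma mp_vol (hξ : ξ ∈ unitTorus n) :
    MeasurePreserving (torusSMul ξ) (volume : Measure (Cn n)) volume := by
  have h : ∀ i : Fin n, MeasurePreserving (fun z : ℂ => ξ i * z) volume volume := by
    intro i
    have ha : ξ i ∈ Submonoid.unitSphere ℂ := by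
      simp [Submonoid.unitSphere, mem_sphere_zero_iff_norm, hξ i]
    exact (rotation (⟨ξ i, ha⟩ : Circle)).measurePreserving
  have := MeasureTheory.measurePreserving_pi (fun _ : Fin n => (volume : Measure ℂ))
    (fun _ => volume) h
  exact this

lemma preimage_eq (hRein : IsReinhardt Ω) (hξ : ξ ∈ unitTorus n) :
    torusSMul ξ ⁻¹' Ω = Ω := by
  ext z; constructor
  · intro hz
    have := hRein _ hz _ (tInv_mem hξ)
    rwa [tInv_smul hξ] at this
  · intro hz; exact hRein _ hz _ hξ

lemma mp_rest (hΩmeas : MeasurableSet Ω) (hRein : IsReinhardt Ω) (hξ : ξ ∈ unitTorus n) :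
    MeasurePreserving (torusSMul ξ) (restVol Ω) (restVol Ω) := by
  have := (mp_vol hξ).restrict_preimage (s := Ω) hΩmeas
  rwa [preimage_eq hRein hξ] at this

lemma eqOn_of_ae_eq (hΩopen : IsOpen Ω) {f g : Cn n → ℂ}
    (hf : ContinuousOn f Ω) (hg : ContinuousOn g Ω) (h : f =ᵐ[restVol Ω] g) :
    ∀ w ∈ Ω, f w = g w := by
  intro w hw
  by_contra hne
  set U : Set (Cn n) := Ω ∩ (fun x => f x - g x) ⁻¹' ({0}ᶜ) with hU
  have hUopen : IsOpen U :=
    (hf.sub hg).isOpen_inter_preimage hΩopen (isOpen_compl_singleton)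
  have hwU : w ∈ U := ⟨hw, by simpa [sub_eq_zero] using hne⟩
  have hU0 : restVol Ω U = 0 := by
    refine measure_mono_null (fun x hx => ?_) (ae_iff.mp h)
    exact fun hfg => hx.2 (by simpa [sub_eq_zero] using hfg)
  have hU0' : (volume : Measure (Cn n)) U = 0 := by
    rwa [Measure.restrict_apply' (hΩopen.measurableSet),
      Set.inter_eq_self_of_subset_left (Set.inter_subset_left)] at hU0
  exact absurd hU0' (hUopen.measure_pos volume ⟨w, hwU⟩).ne'

lemma differentiable_torusSMul (ξ : Cn n) : Differentiable ℂ (torusSMul ξ) := by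
  have : ∀ i : Fin n, Differentiable ℂ (fun z : Cn n => ξ i * z i) := fun i =>
    (differentiable_const (ξ i)).mul
      ((ContinuousLinearMap.proj (R := ℂ) (φ := fun _ : Fin n => ℂ) i).differentiable)
  exact differentiable_pi.mpr this

lemma inner_toLp {μ : Measure (Cn n)} {f g : Cn n → ℂ} (hm1 : MemLp f 2 μ) (hm2 : MemLp g 2 μ) :
    (inner ℂ (hm1.toLp f) (hm2.toLp g) : ℂ) = ∫ a, (starRingEnd ℂ) (f a) * g a ∂μ := by
  rw [MeasureTheory.L2.inner_def]
  apply integral_congr_ae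
  filter_upwards [hm1.coeFn_toLp, hm2.coeFn_toLp] with a h1 h2
  rw [h1, h2, RCLike.inner_apply, mul_comm]

lemma kernel_invariant (hΩopen : IsOpen Ω) (hRein : IsReinhardt Ω) {Kf : Cn n → Cn n → ℂ}
    (hKf : IsBergmanKernel Ω Kf) (hξ : ξ ∈ unitTorus n) {z : Cn n} (hz : z ∈ Ω) :
    ∀ w ∈ Ω, Kf (torusSMul ξ w) (torusSMul ξ z) = Kf w z := by
  have hΩmeas := hΩopen.measurableSet
  have hmaps : Set.MapsTo (torusSMul ξ) Ω Ω := fun w hw => hRein _ hw _ hξ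
  have hmaps' : Set.MapsTo (torusSMul (tInv ξ)) Ω Ω := fun w hw => hRein _ hw _ (tInv_mem hξ)
  have hz' : torusSMul ξ z ∈ Ω := hmaps hz
  set z' := torusSMul ξ z with hz'def
  obtain ⟨hol', hm', hrep'⟩ := hKf z' hz'
  obtain ⟨holz, hmz, hrepz⟩ := hKf z hz
  set g : Cn n → ℂ := fun w => Kf (torusSMul ξ w) z' with hgdef
  have hg_hol : DifferentiableOn ℂ g Ω :=
    hol'.comp (differentiable_torusSMul ξ).differentiableOn hmaps
  have hmp := mp_rest hΩmeas hRein hξ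
  have hmp' := mp_rest hΩmeas hRein (tInv_mem hξ)
  have hg_mem : MemLp g 2 (restVol Ω) := hm'.comp_measurePreserving hmp
  have hrep_g : ∀ (h : Cn n → ℂ) (hh : MemLp h 2 (restVol Ω)), DifferentiableOn ℂ h Ω →
      h z = (inner ℂ (hg_mem.toLp g) (hh.toLp h) : ℂ) := by
    intro h hh hhol
    have hh' : MemLp (h ∘ torusSMul (tInv ξ)) 2 (restVol Ω) := hh.comp_measurePreserving hmp'
    have hhol' : DifferentiableOn ℂ (h ∘ torusSMul (tInv ξ)) Ω :=
      hhol.comp (differentiable_torusSMul (tInv ξ)).differentiableOn hmaps'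
    rw [inner_toLp]
    have key : ∫ a, (starRingEnd ℂ) (g a) * h a ∂(restVol Ω)
        = ∫ u, (starRingEnd ℂ) (Kf u z') * (h ∘ torusSMul (tInv ξ)) u ∂(restVol Ω) := by
      rw [← hmp.integral_comp (tEquiv hξ).measurableEmbedding
        (fun u => (starRingEnd ℂ) (Kf u z') * (h ∘ torusSMul (tInv ξ)) u)]
      apply integral_congr_ae
      apply Filter.Eventually.of_forall
      intro a
      show (starRingEnd ℂ) (g a) * h a
          = (starRingEnd ℂ) (Kf (torusSMul ξ a) z') * h (torusSMul (tInv ξ) (torusSMul ξ a))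
      rw [tInv_smul hξ]
    rw [key, ← inner_toLp hm' hh', ← hrep' _ hh' hhol']
    show h z = h (torusSMul (tInv ξ) (torusSMul ξ z))
    rw [tInv_smul hξ]
  set d : Cn n → ℂ := fun w => g w - Kf w z with hddef
  have hd_mem : MemLp d 2 (restVol Ω) := hg_mem.sub hmz
  have hd_hol : DifferentiableOn ℂ d Ω := hg_hol.sub holz
  have h1 := hrep_g d hd_mem hd_hol
  have h2 := hrepz d hd_mem hd_hol
  have hsub : hd_mem.toLp d = hg_mem.toLp g - hmz.toLp (fun w => Kf w z) :=
    MemLp.toLp_sub hg_mem hmz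
  have hinner : (inner ℂ (hg_mem.toLp g - hmz.toLp (fun w => Kf w z))
      (hg_mem.toLp g - hmz.toLp (fun w => Kf w z)) : ℂ) = 0 := by
    rw [inner_sub_left, ← hsub, ← h1, ← h2, sub_self]
  have hzero : hg_mem.toLp g - hmz.toLp (fun w => Kf w z) = 0 := inner_self_eq_zero.mp hinner
  have hae : g =ᵐ[restVol Ω] fun w => Kf w z :=
    (MemLp.toLp_eq_toLp_iff hg_mem hmz).mp (sub_eq_zero.mp hzero)
  exact eqOn_of_ae_eq hΩopen (hg_hol.continuousOn) (holz.continuousOn) hae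

lemma berezin_rotate (hΩopen : IsOpen Ω) (hRein : IsReinhardt Ω) {Kf : Cn n → Cn n → ℂ}
    (hKf : IsBergmanKernel Ω Kf) (φ : Cn n → ℂ) (hξ : ξ ∈ unitTorus n) {z : Cn n} (hz : z ∈ Ω) :
    berezinFn Ω Kf φ (torusSMul ξ z) =
      (∫ w in Ω, φ (torusSMul ξ w) * (Complex.ofReal (‖Kf w z‖ ^ 2))) / Kf z z := by
  have hΩmeas := hΩopen.measurableSet
  have hinv := kernel_invariant hΩopen hRein hKf hξ hz
  have hden : Kf (torusSMul ξ z) (torusSMul ξ z) = Kf z z := hinv z hz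
  have hmp := mp_rest hΩmeas hRein hξ
  have hnum : (∫ w in Ω, φ w * (Complex.ofReal (‖Kf w (torusSMul ξ z)‖ ^ 2)))
      = ∫ w in Ω, φ (torusSMul ξ w) * (Complex.ofReal (‖Kf w z‖ ^ 2)) := by
    rw [← hmp.integral_comp (tEquiv hξ).measurableEmbedding
      (fun w => φ w * (Complex.ofReal (‖Kf w (torusSMul ξ z)‖ ^ 2)))]
    apply integral_congr_ae
    filter_upwards [ae_restrict_mem hΩmeas] with w hw
    show φ (torusSMul ξ w) * (Complex.ofReal (‖Kf (torusSMul ξ w) (torusSMul ξ z)‖ ^ 2))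
        = φ (torusSMul ξ w) * (Complex.ofReal (‖Kf w z‖ ^ 2))
    rw [hinv w hw]
  rw [berezinFn, hden, hnum]

lemma abs_tpow (hξ : ξ ∈ unitTorus n) (J : Fin n → ℤ) : ‖tpow ξ J‖ = 1 := by
  rw [tpow, norm_prod]
  refine Finset.prod_eq_one fun i _ => ?_
  rw [norm_zpow, hξ i, one_zpow]

end BQC

/-- Let `Ω ⊆ ℂⁿ` be a Reinhardt domain with `K(z,z) ≠ 0` on `Ω`,
`J ∈ ℤⁿ`, `φ ∈ L^∞(Ω)`. Then `(φ_J)~ = (φ̃)_J` on `Ω`. -/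
theorem berezin_qhComp_comm
    {n : ℕ} (Ω : Set (Cn n)) (hΩopen : IsOpen Ω) (hΩconn : IsConnected Ω)
    (hΩRein : IsReinhardt Ω)
    (Kf : Cn n → Cn n → ℂ) (hKf : IsBergmanKernel Ω Kf)
    (hKzz : ∀ z ∈ Ω, Kf z z ≠ 0)
    (J : Fin n → ℤ) (φ : Cn n → ℂ) (hφ : MemLp φ ⊤ (restVol Ω)) :
    ∀ z ∈ Ω, berezinFn Ω Kf (qhComp J φ) z = qhComp J (berezinFn Ω Kf φ) z := by
  classical
  intro z hz
  have hΩmeas := hΩopen.measurableSet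
  obtain ⟨holz, hmz, -⟩ := hKf z hz
  set box : Set (Fin n → ℝ) := Set.univ.pi fun _ : Fin n => Set.Ioc (0 : ℝ) (2 * Real.pi)
    with hbox
  haveI hfin : IsFiniteMeasure (volume.restrict box) := by
    constructor
    rw [Measure.restrict_apply_univ, hbox, volume_pi_pi]
    exact ENNReal.prod_lt_top fun i _ => by simp [Real.volume_Ioc]; exact ENNReal.mul_lt_top (by norm_num) ENNReal.ofReal_lt_top
  set Φ : (Fin n → ℝ) → Cn n := fun θ i => Complex.exp ((θ i : ℂ) * Complex.I) with hΦ
  set R : Cn n → ℂ := fun w => (Complex.ofReal (‖Kf w z‖ ^ 2)) with hR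
  set A : (Fin n → ℝ) → Cn n → ℂ :=
    fun θ w => φ (torusSMul (Φ θ) w) * (starRingEnd ℂ) (tpow (Φ θ) J) * R w with hA
  set Ψ : (Fin n → ℝ) × Cn n → Cn n := fun p => torusSMul (Φ p.1) p.2 with hΨ
  have hΨcont : Continuous Ψ := by
    apply continuous_pi; intro i
    exact ((Complex.continuous_exp.comp ((Complex.continuous_ofReal.comp
      ((continuous_apply i).comp continuous_fst)).mul continuous_const)).mul
      ((continuous_apply i).comp continuous_snd))
  have hqmp : Measure.QuasiMeasurePreserving Ψ
      ((volume.restrict box).prod (restVol Ω)) (restVol Ω) := by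
    refine ⟨hΨcont.measurable, Measure.AbsolutelyContinuous.mk fun s hs h0 => ?_⟩
    rw [Measure.map_apply hΨcont.measurable hs, Measure.prod_apply (hΨcont.measurable hs)]
    have hz0 : ∀ θ : Fin n → ℝ, (restVol Ω) (Prod.mk θ ⁻¹' (Ψ ⁻¹' s)) = 0 := by
      intro θ
      have he : (Prod.mk θ ⁻¹' (Ψ ⁻¹' s)) = torusSMul (Φ θ) ⁻¹' s := rfl
      rw [he, (BQC.mp_rest hΩmeas hΩRein (BQC.mem_exp θ)).measure_preimage
        hs.nullMeasurableSet, h0]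
    simp [hz0]
  have hKzR : AEStronglyMeasurable R (restVol Ω) := by
    have : ContinuousOn R Ω := Complex.continuous_ofReal.comp_continuousOn
      ((continuous_norm.comp_continuousOn holz.continuousOn).pow 2)
    exact this.aestronglyMeasurable hΩmeas
  have hsnd : AEStronglyMeasurable (fun p : (Fin n → ℝ) × Cn n => R p.2)
      ((volume.restrict box).prod (restVol Ω)) :=
    hKzR.comp_quasiMeasurePreserving MeasureTheory.Measure.quasiMeasurePreserving_snd
  have htpow_eq : ∀ θ : Fin n → ℝ,
      tpow (Φ θ) J = ∏ i, Complex.exp ((J i : ℂ) * ((θ i : ℂ) * Complex.I)) := by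
    intro θ; rw [tpow]; exact Finset.prod_congr rfl fun i _ => (Complex.exp_int_mul _ _).symm
  have htcont : Continuous fun θ : Fin n → ℝ => (starRingEnd ℂ) (tpow (Φ θ) J) := by
    have hc : Continuous fun θ : Fin n → ℝ => tpow (Φ θ) J := by
      simp only [htpow_eq]
      exact continuous_finset_prod _ fun i _ => Complex.continuous_exp.comp
        (continuous_const.mul ((Complex.continuous_ofReal.comp (continuous_apply i)).mul
          continuous_const))
    exact Complex.continuous_conj.comp hc
  have hA_aesm : AEStronglyMeasurable (Function.uncurry A)
      ((volume.restrict box).prod (restVol Ω)) := by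
    have h1 : AEStronglyMeasurable (fun p : (Fin n → ℝ) × Cn n => φ (Ψ p))
        ((volume.restrict box).prod (restVol Ω)) :=
      hφ.aestronglyMeasurable.comp_quasiMeasurePreserving hqmp
    have h2 : AEStronglyMeasurable
        (fun p : (Fin n → ℝ) × Cn n => (starRingEnd ℂ) (tpow (Φ p.1) J))
        ((volume.restrict box).prod (restVol Ω)) :=
      (htcont.comp continuous_fst).aestronglyMeasurable
    exact (h1.mul h2).mul hsnd
  set C : ℝ := (eLpNormEssSup φ (restVol Ω)).toReal with hC
  have hφC : ∀ᵐ w ∂(restVol Ω), ‖φ w‖ ≤ C := by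
    have hlt : eLpNormEssSup φ (restVol Ω) < ⊤ := by
      have h2 := hφ.2; rwa [eLpNorm_exponent_top] at h2
    filter_upwards [ae_le_eLpNormEssSup (f := φ) (μ := restVol Ω)] with w hw
    calc ‖φ w‖ = ((‖φ w‖₊ : ENNReal)).toReal := by simp
    _ ≤ C := ENNReal.toReal_mono hlt.ne hw
  have hbound : ∀ᵐ p ∂((volume.restrict box).prod (restVol Ω)),
      ‖Function.uncurry A p‖ ≤ C * ((‖Kf p.2 z‖) ^ 2) := by
    filter_upwards [hqmp.ae hφC] with p hp
    have h2 : ‖(starRingEnd ℂ) (tpow (Φ p.1) J)‖ = 1 := by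
      rw [Complex.norm_conj, BQC.abs_tpow (BQC.mem_exp p.1)]
    have h3 : ‖R p.2‖ = (‖Kf p.2 z‖) ^ 2 := by
      rw [hR, Complex.norm_real, Real.norm_eq_abs,
        _root_.abs_of_nonneg (pow_nonneg (norm_nonneg _) 2)]
    calc ‖Function.uncurry A p‖
        = ‖φ (Ψ p)‖ * ‖(starRingEnd ℂ) (tpow (Φ p.1) J)‖ * ‖R p.2‖ := by
          rw [Function.uncurry, hA]; rw [norm_mul, norm_mul]
      _ = ‖φ (Ψ p)‖ * (‖Kf p.2 z‖) ^ 2 := by rw [h2, h3, mul_one]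
      _ ≤ C * (‖Kf p.2 z‖) ^ 2 :=
          mul_le_mul_of_nonneg_right hp (by positivity)
  have hdom : Integrable (fun p : (Fin n → ℝ) × Cn n => C * ((‖Kf p.2 z‖) ^ 2))
      ((volume.restrict box).prod (restVol Ω)) := by
    have hK2 : Integrable (fun w => (‖Kf w z‖) ^ 2) (restVol Ω) := by
      have h4 := hmz.integrable_norm_rpow (by norm_num) (by norm_num)
      simpa [Real.rpow_natCast] using h4
    exact (integrable_const C).mul_prod hK2
  have hA_int : Integrable (Function.uncurry A)
      ((volume.restrict box).prod (restVol Ω)) := hdom.mono' hA_aesm hbound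
  have hswap : (∫ θ in box, ∫ w in Ω, A θ w) = ∫ w in Ω, ∫ θ in box, A θ w :=
    integral_integral_swap hA_int
  have lhs_eq : berezinFn Ω Kf (qhComp J φ) z
      = ((((2 * Real.pi) ^ n)⁻¹ : ℝ) • ∫ w in Ω, ∫ θ in box, A θ w) / Kf z z := by
    rw [berezinFn]
    congr 1
    rw [← integral_smul]
    apply integral_congr_ae; apply Filter.Eventually.of_forall; intro w
    show qhComp J φ w * R w = _
    rw [qhComp, torusAvg, smul_mul_assoc]
    congr 1
    rw [← integral_mul_const]
  have rhs_eq : qhComp J (berezinFn Ω Kf φ) z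
      = ((((2 * Real.pi) ^ n)⁻¹ : ℝ) • ∫ θ in box, ∫ w in Ω, A θ w) / Kf z z := by
    rw [qhComp, torusAvg, smul_div_assoc]
    congr 1
    rw [← integral_div]
    apply integral_congr_ae; apply Filter.Eventually.of_forall; intro θ
    show berezinFn Ω Kf φ (torusSMul (Φ θ) z) * (starRingEnd ℂ) (tpow (Φ θ) J)
        = (∫ w in Ω, A θ w) / Kf z z
    rw [BQC.berezin_rotate hΩopen hΩRein hKf φ (BQC.mem_exp θ) hz, div_mul_eq_mul_div]
    congr 1
    rw [← integral_mul_const]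
    apply integral_congr_ae; apply Filter.Eventually.of_forall; intro w
    show φ (torusSMul (Φ θ) w) * R w * (starRingEnd ℂ) (tpow (Φ θ) J) = A θ w
    rw [hA]
    ring
  rw [lhs_eq, rhs_eq, hswap]

end
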